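/- Fix λ ≥ 1, let R = 2^λ and M = R/2. For s ∈ ℂ^R, the design matrix S(s) is a scaled unitary matrix with S(s)ᴴ S(s) = (Σ_{i=0}^{R−1} |s_i|²) · I_R if and only if for every nonzero e ∈ {1,...,M−1} one has Σ_{m=0}^{M−1} ( conj(s_m) s_{m⊕e} + conj(s_{M+m}) s_{M+(m⊕e)} ) = 0. (In particular, for R = 4 the condition reads Re(conj(s_0) s_1 + conj(s_2) s_3) = 0, which is the scaled-unitarity condition on the signal set for the 4-relay code.) -/

import Mathlib

open Matrix

namespace DDSTC

/-- Index type `{0, ..., M-1}` with `M = 2^(λ-1)` (so `R = 2^λ = 2*M`,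
and `R×R` matrices are indexed by `Idx lam ⊕ Idx lam`). -/
abbrev Idx (lam : ℕ) := Fin (2 ^ (lam - 1))

/-- Bitwise XOR `⊕` on `{0, ..., 2^(λ-1) - 1}`. -/
def fx {lam : ℕ} (i j : Idx lam) : Idx lam :=
  ⟨i.val ^^^ j.val, Nat.xor_lt_two_pow i.isLt j.isLt⟩

/-- The matrix `P_k ∈ M_M(ℂ)`, with `(P_k)_{ij} = 1` if `j = i ⊕ k` and `0` otherwise. -/
def P {lam : ℕ} (k : Idx lam) : Matrix (Idx lam) (Idx lam) ℂ :=
  Matrix.of fun i j => if j = fx i k then 1 else 0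

/-- The `R×R` design matrix `S(s) = [[C(s), -conj(D(s))], [D(s), conj(C(s))]]`
where `C(s)_{ij} = s_{i⊕j}` and `D(s)_{ij} = s_{M+(i⊕j)}`. -/
def Sdes {lam : ℕ} (s : Idx lam ⊕ Idx lam → ℂ) :
    Matrix (Idx lam ⊕ Idx lam) (Idx lam ⊕ Idx lam) ℂ :=
  Matrix.fromBlocks
    (Matrix.of fun i j => s (Sum.inl (fx i j)))
    (-(Matrix.of fun i j => starRingEnd ℂ (s (Sum.inr (fx i j)))))
    (Matrix.of fun i j => s (Sum.inr (fx i j)))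
    (Matrix.of fun i j => starRingEnd ℂ (s (Sum.inl (fx i j))))

/-- The relay matrices: `A_k = [[P_k, 0], [0, P_k]]` for `0 ≤ k < M` (index `Sum.inl k`)
and `A_{M+k} = [[0, -P_k], [P_k, 0]]` for `0 ≤ k < M` (index `Sum.inr k`). -/
def Arel {lam : ℕ} : Idx lam ⊕ Idx lam → Matrix (Idx lam ⊕ Idx lam) (Idx lam ⊕ Idx lam) ℂ
  | Sum.inl k => Matrix.fromBlocks (P k) 0 0 (P k)
  | Sum.inr k => Matrix.fromBlocks 0 (-(P k)) (P k) 0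

section aux

variable {lam : ℕ}

lemma fx_comm (i j : Idx lam) : fx i j = fx j i := by
  simp [fx, Nat.xor_comm]

@[simp] lemma fx_assoc (a b c : Idx lam) : fx (fx a b) c = fx a (fx b c) := by
  simp [fx, Nat.xor_assoc]

@[simp] lemma fx_self (i : Idx lam) : fx i i = 0 := by
  apply Fin.ext
  simp [fx]

@[simp] lemma fx_zero (i : Idx lam) : fx i 0 = i := by
  apply Fin.ext
  simp [fx]

@[simp] lemma zero_fx (i : Idx lam) : fx 0 i = i := by
  rw [fx_comm, fx_zero]

@[simp] lemma fx_cancel (m i : Idx lam) : fx (fx m i) i = m := by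
  rw [fx_assoc, fx_self, fx_zero]

@[simp] lemma fx_fxij_i (i j : Idx lam) : fx (fx i j) i = j := by
  rw [fx_comm i j, fx_cancel]

@[simp] lemma fx_fxij_j (i j : Idx lam) : fx (fx i j) j = i := by
  rw [fx_assoc, fx_self, fx_zero]

@[simp] lemma fx_i_fxij (i j : Idx lam) : fx i (fx i j) = j := by
  rw [fx_comm, fx_fxij_i]

@[simp] lemma fx_j_fxij (i j : Idx lam) : fx j (fx i j) = i := by
  rw [fx_comm, fx_fxij_j]

lemma fx_eq_zero_iff {i j : Idx lam} : fx i j = 0 ↔ i = j := by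
  constructor
  · intro h
    have : i.val ^^^ j.val = 0 := congrArg Fin.val h
    exact Fin.ext (xor_eq_zero_iff.mp this)
  · rintro rfl; exact fx_self i

/-- XOR by a fixed element, as an equivalence. -/
def fxEquiv (i : Idx lam) : Idx lam ≃ Idx lam where
  toFun m := fx m i
  invFun m := fx m i
  left_inv m := fx_cancel m i
  right_inv m := fx_cancel m i

/-- The correlation sum appearing in the statement. -/
noncomputable def fsum (s : Idx lam ⊕ Idx lam → ℂ) (e : Idx lam) : ℂ :=
  ∑ m : Idx lam,
    (starRingEnd ℂ (s (Sum.inl m)) * s (Sum.inl (fx m e)) +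
      starRingEnd ℂ (s (Sum.inr m)) * s (Sum.inr (fx m e)))

lemma fsum_zero (s : Idx lam ⊕ Idx lam → ℂ) :
    fsum s 0 = ((∑ i : Idx lam ⊕ Idx lam, ‖s i‖ ^ 2 : ℝ) : ℂ) := by
  simp only [fsum, fx_zero, Fintype.sum_sum_type]
  push_cast
  rw [← Finset.sum_add_distrib]
  refine Finset.sum_congr rfl fun m _ => ?_
  rw [Complex.conj_mul', Complex.conj_mul']

lemma entry_ll (s : Idx lam ⊕ Idx lam → ℂ) (i j : Idx lam) :
    ((Sdes s)ᴴ * Sdes s) (Sum.inl i) (Sum.inl j) = fsum s (fx i j) := by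
  simp only [Matrix.mul_apply, Fintype.sum_sum_type, Sdes, Matrix.conjTranspose_apply,
    Matrix.fromBlocks_apply₁₁, Matrix.fromBlocks_apply₂₁, Matrix.of_apply,
    Complex.star_def]
  rw [fsum, Finset.sum_add_distrib]
  congr 1
  · exact Fintype.sum_equiv (fxEquiv i) _ _ fun x => by simp [fxEquiv]
  · exact Fintype.sum_equiv (fxEquiv i) _ _ fun x => by simp [fxEquiv]

lemma entry_rr (s : Idx lam ⊕ Idx lam → ℂ) (i j : Idx lam) :
    ((Sdes s)ᴴ * Sdes s) (Sum.inr i) (Sum.inr j) = fsum s (fx i j) := by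
  simp only [Matrix.mul_apply, Fintype.sum_sum_type, Sdes, Matrix.conjTranspose_apply,
    Matrix.fromBlocks_apply₁₂, Matrix.fromBlocks_apply₂₂, Matrix.of_apply,
    Matrix.neg_apply, Complex.star_def, map_neg, Complex.conj_conj, neg_neg,
    neg_mul, mul_neg]
  rw [fsum, Finset.sum_add_distrib, add_comm]
  congr 1
  · exact Fintype.sum_equiv (fxEquiv j) _ _ fun x => by simp [fxEquiv, mul_comm]
  · exact Fintype.sum_equiv (fxEquiv j) _ _ fun x => by simp [fxEquiv, mul_comm]

lemma entry_lr (s : Idx lam ⊕ Idx lam → ℂ) (i j : Idx lam) :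
    ((Sdes s)ᴴ * Sdes s) (Sum.inl i) (Sum.inr j) = 0 := by
  simp only [Matrix.mul_apply, Fintype.sum_sum_type, Sdes, Matrix.conjTranspose_apply,
    Matrix.fromBlocks_apply₁₁, Matrix.fromBlocks_apply₂₁, Matrix.fromBlocks_apply₁₂,
    Matrix.fromBlocks_apply₂₂, Matrix.of_apply, Matrix.neg_apply, Complex.star_def,
    map_neg, Complex.conj_conj, neg_neg, neg_mul, mul_neg]
  have h2 : ∑ x : Idx lam,
      starRingEnd ℂ (s (Sum.inr (fx x i))) * starRingEnd ℂ (s (Sum.inl (fx x j)))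
      = ∑ x : Idx lam,
      starRingEnd ℂ (s (Sum.inl (fx x i))) * starRingEnd ℂ (s (Sum.inr (fx x j))) :=
    Fintype.sum_equiv (fxEquiv (fx i j)) _ _ fun x => by simp [fxEquiv, mul_comm]
  rw [h2, ← Finset.sum_add_distrib]
  simp

lemma entry_rl (s : Idx lam ⊕ Idx lam → ℂ) (i j : Idx lam) :
    ((Sdes s)ᴴ * Sdes s) (Sum.inr i) (Sum.inl j) = 0 := by
  simp only [Matrix.mul_apply, Fintype.sum_sum_type, Sdes, Matrix.conjTranspose_apply,
    Matrix.fromBlocks_apply₁₁, Matrix.fromBlocks_apply₂₁, Matrix.fromBlocks_apply₁₂,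
    Matrix.fromBlocks_apply₂₂, Matrix.of_apply, Matrix.neg_apply, Complex.star_def,
    map_neg, Complex.conj_conj, neg_neg, neg_mul, mul_neg]
  have h2 : ∑ x : Idx lam, s (Sum.inl (fx x i)) * s (Sum.inr (fx x j))
      = ∑ x : Idx lam, s (Sum.inr (fx x i)) * s (Sum.inl (fx x j)) :=
    Fintype.sum_equiv (fxEquiv (fx i j)) _ _ fun x => by simp [fxEquiv, mul_comm]
  rw [h2, ← Finset.sum_add_distrib]
  simp

end aux

/-- `S(s)` is scaled unitary with `S(s)ᴴ S(s) = (Σ_i |s_i|²) I_R` if and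
only if for every nonzero `e ∈ {1, ..., M-1}`,
`Σ_{m=0}^{M-1} (conj(s_m) s_{m⊕e} + conj(s_{M+m}) s_{M+(m⊕e)}) = 0`. -/
theorem stmt8 (lam : ℕ) (hlam : 1 ≤ lam) (s : Idx lam ⊕ Idx lam → ℂ) :
    (Sdes s)ᴴ * Sdes s = ((∑ i : Idx lam ⊕ Idx lam, ‖s i‖ ^ 2 : ℝ) : ℂ) • 1 ↔
      ∀ e : Idx lam, e ≠ 0 →
        ∑ m : Idx lam,
          (starRingEnd ℂ (s (Sum.inl m)) * s (Sum.inl (fx m e)) +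
            starRingEnd ℂ (s (Sum.inr m)) * s (Sum.inr (fx m e))) = 0 := by
  constructor
  · intro h e he
    have h2 := congrFun (congrFun h (Sum.inl 0)) (Sum.inl e)
    rw [entry_ll, zero_fx] at h2
    rw [show (∑ m : Idx lam,
          (starRingEnd ℂ (s (Sum.inl m)) * s (Sum.inl (fx m e)) +
            starRingEnd ℂ (s (Sum.inr m)) * s (Sum.inr (fx m e)))) = fsum s e from rfl, h2]
    have : Sum.inl (α := Idx lam) (β := Idx lam) 0 ≠ Sum.inl e := by
      simpa using he.symm
    simp [Matrix.one_apply_ne this]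
  · intro h
    have key : ∀ i j : Idx lam, fsum s (fx i j) =
        ((∑ i : Idx lam ⊕ Idx lam, ‖s i‖ ^ 2 : ℝ) : ℂ) *
          (if i = j then 1 else 0) := by
      intro i j
      by_cases hij : i = j
      · subst hij; rw [fx_self, fsum_zero]; simp
      · rw [fsum, h (fx i j) (fun hz => hij (fx_eq_zero_iff.mp hz))]; simp [hij]
    ext a b
    rcases a with i | i <;> rcases b with j | j
    · rw [entry_ll, key i j]
      simp [Matrix.one_apply, Sum.inl.injEq]
    · rw [entry_lr]; simp [Matrix.one_apply]
    · rw [entry_rl]; simp [Matrix.one_apply]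
    · rw [entry_rr, key i j]
      simp [Matrix.one_apply, Sum.inr.injEq]

end DDSTC
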